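/- Let C⃗ be an orientation of a cycle of length ℓ ≥ 4 that contains a block (maximal directed subpath) with at least 3 edges. If G is a graph with m(G) < m₂(C⃗) = (ℓ−1)/(ℓ−2), then some orientation of G contains no copy of C⃗. -/

import Mathlib

/-- An orientation of a simple graph `G`: an assignment of a direction to each edge. -/
structure GraphOrientation {V : Type*} (G : SimpleGraph V) where
  adj : V → V → Prop
  le : ∀ {u v}, adj u v → G.Adj u v
  total : ∀ {u v}, G.Adj u v → adj u v ∨ adj v u
  asymm : ∀ {u v}, adj u v → ¬ adj v u

/-- Every nonempty vertex finset contains a vertex with at most 2 neighbours inside it,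
provided the density of every nonempty subgraph is below `q ≤ 3/2`. -/
lemma exists_low_degree_vertex {V : Type*} [Fintype V] (G : SimpleGraph V)
    [DecidableRel G.Adj] (q : ℚ) (hq : q ≤ 3 / 2)
    (hm : ∀ J : G.Subgraph, J.verts.Nonempty →
      (J.edgeSet.ncard : ℚ) < q * J.verts.ncard)
    (S : Finset V) (hS : S.Nonempty) :
    ∃ v ∈ S, (S.filter (G.Adj v)).card ≤ 2 := by
  classical
  by_contra hcon
  push_neg at hcon
  set J : G.Subgraph := (⊤ : G.Subgraph).induce ↑S with hJ
  have hverts : J.verts = (↑S : Set V) := rfl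
  have hne : J.verts.Nonempty := by
    rw [hverts]
    exact ⟨hS.choose, by simpa using hS.choose_spec⟩
  haveI : Fintype ↥J.verts := by rw [hverts]; infer_instance
  haveI : DecidableRel J.coe.Adj := Classical.decRel _
  -- every vertex of `J.coe` has degree at least 3
  have hdeg : ∀ w : ↥J.verts, 3 ≤ J.coe.degree w := by
    intro w
    have hwS : (w : V) ∈ S := w.2
    have hsub : S.filter (G.Adj (w : V)) ⊆
        (J.coe.neighborFinset w).image Subtype.val := by
      intro u hu
      rw [Finset.mem_filter] at hu
      have huS : u ∈ J.verts := by rw [hverts]; exact hu.1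
      refine Finset.mem_image.2 ⟨⟨u, huS⟩, ?_, rfl⟩
      rw [SimpleGraph.mem_neighborFinset]
      show J.Adj (w : V) u
      simp [hJ, SimpleGraph.Subgraph.induce_adj, hwS, hu.1, hu.2]
    have h3 : 3 ≤ (S.filter (G.Adj (w : V))).card := hcon (w : V) hwS
    calc 3 ≤ (S.filter (G.Adj (w : V))).card := h3
      _ ≤ ((J.coe.neighborFinset w).image Subtype.val).card := Finset.card_le_card hsub
      _ ≤ (J.coe.neighborFinset w).card := Finset.card_image_le
      _ = J.coe.degree w := (J.coe.card_neighborFinset_eq_degree w)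
  -- degree sum
  have hsum : 3 * Fintype.card ↥J.verts ≤ 2 * J.coe.edgeFinset.card := by
    calc 3 * Fintype.card ↥J.verts = ∑ _w : ↥J.verts, 3 := by
          rw [Finset.sum_const, Finset.card_univ, smul_eq_mul, mul_comm]
      _ ≤ ∑ w, J.coe.degree w := Finset.sum_le_sum fun w _ => hdeg w
      _ = 2 * J.coe.edgeFinset.card := by
          rw [← J.coe.sum_degrees_eq_twice_card_edges]; congr!
  -- translate cardinalities
  have hcardV : Fintype.card ↥J.verts = S.card := by
    rw [← Nat.card_eq_fintype_card, Nat.card_coe_set_eq, hverts, Set.ncard_coe_finset]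
  have hcardE : J.coe.edgeFinset.card = J.edgeSet.ncard := by
    rw [SimpleGraph.edgeFinset, Set.toFinset_card, ← Nat.card_eq_fintype_card,
      Nat.card_coe_set_eq, ← J.image_coe_edgeSet_coe,
      Set.ncard_image_of_injective _ (Sym2.map.injective Subtype.val_injective)]
  have hkey : 3 * S.card ≤ 2 * J.edgeSet.ncard := by
    rw [← hcardV, ← hcardE]; exact hsum
  have hmain := hm J hne
  have hvcard : (J.verts.ncard : ℚ) = (S.card : ℚ) := by
    rw [hverts, Set.ncard_coe_finset]
  rw [hvcard] at hmain
  have h1 : (J.edgeSet.ncard : ℚ) < (3 / 2) * S.card := by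
    refine lt_of_lt_of_le hmain (mul_le_mul_of_nonneg_right hq (by positivity))
  have h2 : (3 : ℚ) * S.card ≤ 2 * J.edgeSet.ncard := by
    exact_mod_cast Nat.cast_le.2 hkey
  linarith

/-- A graph in which every nonempty vertex finset has a vertex of inner degree at most 2
is 3-colourable (greedy colouring). -/
lemma three_colorable_of_low_degree {V : Type*} [Fintype V] (G : SimpleGraph V)
    [DecidableRel G.Adj]
    (hlow : ∀ S : Finset V, S.Nonempty → ∃ v ∈ S, (S.filter (G.Adj v)).card ≤ 2) :
    ∀ S : Finset V, ∃ c : V → Fin 3, ∀ u ∈ S, ∀ w ∈ S, G.Adj u w → c u ≠ c w := by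
  classical
  intro S
  induction S using Finset.strongInduction with
  | _ S ih =>
    rcases S.eq_empty_or_nonempty with rfl | hS
    · exact ⟨fun _ => 0, by simp⟩
    obtain ⟨v, hv, hdeg⟩ := hlow S hS
    obtain ⟨c, hc⟩ := ih (S.erase v) (Finset.erase_ssubset hv)
    set N : Finset (Fin 3) := ((S.erase v).filter (G.Adj v)).image c with hN
    have hNcard : N.card ≤ 2 := by
      calc N.card ≤ ((S.erase v).filter (G.Adj v)).card := Finset.card_image_le
        _ ≤ (S.filter (G.Adj v)).card :=
            Finset.card_le_card (Finset.filter_subset_filter _ (Finset.erase_subset _ _))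
        _ ≤ 2 := hdeg
    have hex : ∃ k : Fin 3, k ∉ N := by
      by_contra h
      push_neg at h
      have : (Finset.univ : Finset (Fin 3)) ⊆ N := fun k _ => h k
      have := Finset.card_le_card this
      simp at this
      omega
    obtain ⟨k, hk⟩ := hex
    refine ⟨Function.update c v k, ?_⟩
    intro u hu w hw hadj
    rcases eq_or_ne u v with rfl | huv
    · rcases eq_or_ne w u with rfl | hwu
      · exact absurd hadj (G.irrefl)
      · rw [Function.update_self, Function.update_of_ne hwu]
        intro heq
        exact hk (by
          rw [hN]
          exact Finset.mem_image.2 ⟨w, Finset.mem_filter.2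
            ⟨Finset.mem_erase.2 ⟨hwu, hw⟩, hadj⟩, heq.symm⟩)
    · rcases eq_or_ne w v with rfl | hwv
      · rw [Function.update_self, Function.update_of_ne huv]
        intro heq
        exact hk (by
          rw [hN]
          exact Finset.mem_image.2 ⟨u, Finset.mem_filter.2
            ⟨Finset.mem_erase.2 ⟨huv, hu⟩, hadj.symm⟩, heq⟩)
      · rw [Function.update_of_ne huv, Function.update_of_ne hwv]
        exact hc u (Finset.mem_erase.2 ⟨huv, hu⟩) w (Finset.mem_erase.2 ⟨hwv, hw⟩) hadj

/-- Let `C⃗` be an orientation of the cycle of length `ℓ = n + 4 ≥ 4`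
(encoded by `σ : Fin ℓ → Bool`, where `σ i = true` means the edge `{i, i+1}` is
directed `i → i+1`) which contains a block (maximal directed subpath) with at least 3
edges, i.e. three consecutive edges oriented the same way.  If `G` is a graph with
`m(G) < m₂(C_ℓ) = (ℓ-1)/(ℓ-2)`, then some orientation of `G` contains no copy of `C⃗`. -/
theorem not_oriented_ramsey_cycle_long_block {V : Type*} [Fintype V]
    (n : ℕ) (σ : Fin (n + 4) → Bool)
    (hblock : ∃ (i : Fin (n + 4)) (b : Bool),
      σ i = b ∧ σ (i + 1) = b ∧ σ (i + 2) = b)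
    (G : SimpleGraph V)
    (hm : ∀ J : G.Subgraph, J.verts.Nonempty →
      (J.edgeSet.ncard : ℚ) < (((n : ℚ) + 3) / ((n : ℚ) + 2)) * J.verts.ncard) :
    ∃ o : GraphOrientation G, ¬ ∃ f : Fin (n + 4) → V, Function.Injective f ∧
      ∀ i : Fin (n + 4), (σ i = true → o.adj (f i) (f (i + 1))) ∧
        (σ i = false → o.adj (f (i + 1)) (f i)) := by
  classical
  haveI : DecidableRel G.Adj := Classical.decRel _
  -- the density constant is at most 3/2
  have hq : ((n : ℚ) + 3) / ((n : ℚ) + 2) ≤ 3 / 2 := by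
    rw [div_le_div_iff₀ (by positivity) (by norm_num)]
    have : (0 : ℚ) ≤ (n : ℚ) := Nat.cast_nonneg n
    linarith
  have hlow := exists_low_degree_vertex G _ hq hm
  obtain ⟨c, hc⟩ := three_colorable_of_low_degree G hlow Finset.univ
  have hcol : ∀ u w : V, G.Adj u w → c u ≠ c w := fun u w h =>
    hc u (Finset.mem_univ u) w (Finset.mem_univ w) h
  refine ⟨⟨fun u v => G.Adj u v ∧ c u < c v, fun h => h.1, ?_, ?_⟩, ?_⟩
  · intro u v h
    rcases lt_or_gt_of_ne (hcol u v h) with hlt | hgt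
    · exact Or.inl ⟨h, hlt⟩
    · exact Or.inr ⟨h.symm, hgt⟩
  · rintro u v ⟨_, h1⟩ ⟨_, h2⟩
    exact absurd h2 (not_lt_of_gt h1)
  · rintro ⟨f, hinj, hcopy⟩
    obtain ⟨i, b, h0, h1, h2⟩ := hblock
    have hii : i + 1 + 1 = i + 2 := by open Fin.CommRing in ring
    have hiii : i + 2 + 1 = i + 3 := by open Fin.CommRing in ring
    cases b with
    | true =>
      have a0 := ((hcopy i).1 h0).2
      have a1 := ((hcopy (i + 1)).1 h1).2
      have a2 := ((hcopy (i + 2)).1 h2).2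
      rw [hii] at a1
      rw [hiii] at a2
      have v0 : (c (f i)).val < (c (f (i + 1))).val := a0
      have v1 : (c (f (i + 1))).val < (c (f (i + 2))).val := a1
      have v2 : (c (f (i + 2))).val < (c (f (i + 3))).val := a2
      have := (c (f (i + 3))).isLt
      omega
    | false =>
      have a0 := ((hcopy i).2 h0).2
      have a1 := ((hcopy (i + 1)).2 h1).2
      have a2 := ((hcopy (i + 2)).2 h2).2
      rw [hii] at a1
      rw [hiii] at a2
      have v0 : (c (f (i + 1))).val < (c (f i)).val := a0
      have v1 : (c (f (i + 2))).val < (c (f (i + 1))).val := a1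
      have v2 : (c (f (i + 3))).val < (c (f (i + 2))).val := a2
      have := (c (f i)).isLt
      omega
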